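/- Let S and A be nonempty finite sets, T ≥ 0, p₀ a strictly positive PMF on S, P(·|s,a) a strictly positive PMF on S for each (s,a), r : S × A → ℝ, and fix strictly positive policies π_0,…,π_{T−1} (each π_t(·|s) a PMF on A). For a trajectory τ = (s⁰,a⁰,…,s^T,a^T,s^{T+1}), let p̂(τ) = p₀(s⁰)·Π_{t=0}^{T} P(s^{t+1}|s^t,a^t)·Π_{t=0}^{T} π_t(a^t|s^t) and p(τ) = (1/Z)·p₀(s⁰)·Π_{t=0}^{T} P(s^{t+1}|s^t,a^t)·exp(Σ_{t=0}^{T} r(s^t,a^t)) with Z the normalizing constant. Then, viewing KL(p̂ ‖ p) as a function of the time-T policy π_T with π_0,…,π_{T−1} fixed, it is minimized over all choices of π_T (assigning to each state a PMF on A) exactly when π_T(a|s) = exp(r(s,a)) / Σ_{a'∈A} exp(r(s,a')) for every s ∈ S. -/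

import Mathlib

noncomputable def KLdiv {X : Type*} [Fintype X] (p q : X → ℝ) : ℝ :=
  ∑ x, p x * Real.log (p x / q x)

noncomputable def trajHat {S A : Type*} [Fintype S] [Fintype A] (T : ℕ)
    (p0 : S → ℝ) (P : S → A → S → ℝ) (pol : Fin (T + 1) → S → A → ℝ) :
    (Fin (T + 2) → S) × (Fin (T + 1) → A) → ℝ :=
  fun τ => p0 (τ.1 0) * ∏ t : Fin (T + 1),
    (P (τ.1 t.castSucc) (τ.2 t) (τ.1 t.succ) * pol t (τ.1 t.castSucc) (τ.2 t))

noncomputable def trajOptW {S A : Type*} [Fintype S] [Fintype A] (T : ℕ)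
    (p0 : S → ℝ) (P : S → A → S → ℝ) (r : S → A → ℝ) :
    (Fin (T + 2) → S) × (Fin (T + 1) → A) → ℝ :=
  fun τ => p0 (τ.1 0) * (∏ t : Fin (T + 1), P (τ.1 t.castSucc) (τ.2 t) (τ.1 t.succ)) *
    Real.exp (∑ t : Fin (T + 1), r (τ.1 t.castSucc) (τ.2 t))

def fullPol {S A : Type*} (T : ℕ) (polInit : Fin T → S → A → ℝ)
    (πT : S → A → ℝ) : Fin (T + 1) → S → A → ℝ :=
  fun t => if h : (t : ℕ) < T then polInit ⟨(t : ℕ), h⟩ else πT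

section aux
set_option linter.unusedSectionVars false
variable {S A : Type*} [Fintype S] [Fintype A]

noncomputable def B1 (T : ℕ) (p0 : S → ℝ) (P : S → A → S → ℝ)
    (polInit : Fin T → S → A → ℝ) (σ : Fin (T+1) → S) (α : Fin T → A) : ℝ :=
  p0 (σ 0) * ∏ t : Fin T, (P (σ t.castSucc) (α t) (σ t.succ) * polInit t (σ t.castSucc) (α t))

noncomputable def W1 (T : ℕ) (p0 : S → ℝ) (P : S → A → S → ℝ)
    (r : S → A → ℝ) (σ : Fin (T+1) → S) (α : Fin T → A) : ℝ :=
  p0 (σ 0) * (∏ t : Fin T, P (σ t.castSucc) (α t) (σ t.succ)) *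
    Real.exp (∑ t : Fin T, r (σ t.castSucc) (α t))

lemma fullPol_castSucc (T : ℕ) (polInit : Fin T → S → A → ℝ) (π : S → A → ℝ) (t : Fin T) :
    fullPol T polInit π t.castSucc = polInit t := by
  simp [fullPol, t.isLt]

lemma fullPol_last (T : ℕ) (polInit : Fin T → S → A → ℝ) (π : S → A → ℝ) :
    fullPol T polInit π (Fin.last T) = π := by
  simp [fullPol]

lemma trajHat_snoc (T : ℕ) (p0 : S → ℝ) (P : S → A → S → ℝ)
    (polInit : Fin T → S → A → ℝ) (π : S → A → ℝ)
    (σ : Fin (T+1) → S) (s' : S) (α : Fin T → A) (a : A) :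
    trajHat T p0 P (fullPol T polInit π) (Fin.snoc σ s', Fin.snoc α a)
      = B1 T p0 P polInit σ α * (P (σ (Fin.last T)) a s' * π (σ (Fin.last T)) a) := by
  unfold trajHat B1
  rw [Fin.prod_univ_castSucc]
  simp only [Fin.snoc_castSucc, Fin.snoc_last, Fin.succ_castSucc, Fin.succ_last,
    fullPol_castSucc, fullPol_last]
  have h0 : (Fin.snoc σ s' : Fin (T+2) → S) 0 = σ 0 := by
    have : (0 : Fin (T+2)) = Fin.castSucc 0 := rfl
    rw [this, Fin.snoc_castSucc]
  rw [h0]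
  ring

lemma trajOptW_snoc (T : ℕ) (p0 : S → ℝ) (P : S → A → S → ℝ) (r : S → A → ℝ)
    (σ : Fin (T+1) → S) (s' : S) (α : Fin T → A) (a : A) :
    trajOptW T p0 P r (Fin.snoc σ s', Fin.snoc α a)
      = W1 T p0 P r σ α * (P (σ (Fin.last T)) a s' * Real.exp (r (σ (Fin.last T)) a)) := by
  unfold trajOptW W1
  rw [Fin.prod_univ_castSucc, Fin.sum_univ_castSucc, Real.exp_add]
  simp only [Fin.snoc_castSucc, Fin.snoc_last, Fin.succ_castSucc, Fin.succ_last]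
  have h0 : (Fin.snoc σ s' : Fin (T+2) → S) 0 = σ 0 := by
    have : (0 : Fin (T+2)) = Fin.castSucc 0 := rfl
    rw [this, Fin.snoc_castSucc]
  rw [h0]
  ring

lemma gibbs {X : Type*} [Fintype X] {p q : X → ℝ} (hp : ∀ x, 0 ≤ p x) (hq : ∀ x, 0 < q x)
    (hs : ∑ x, p x = ∑ x, q x) :
    0 ≤ ∑ x, p x * Real.log (p x / q x) ∧
      (∑ x, p x * Real.log (p x / q x) = 0 → p = q) := by
  set t : X → ℝ := fun x => p x * Real.log (p x / q x) - p x + q x with ht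
  have hterm : ∀ x, 0 ≤ t x ∧ (t x = 0 → p x = q x) := by
    intro x
    rcases eq_or_lt_of_le (hp x) with h | h
    · have : t x = q x := by simp [ht, ← h]
      exact ⟨by rw [this]; exact (hq x).le, fun h0 => absurd (this ▸ h0) (hq x).ne'⟩
    · have hu : 0 < q x / p x := div_pos (hq x) h
      have hlog : Real.log (p x / q x) = - Real.log (q x / p x) := by
        rw [← Real.log_inv]; congr 1; field_simp
      have htx : t x = p x * ((q x / p x) - 1 - Real.log (q x / p x)) := by
        rw [ht]; simp only [hlog]
        have hpq : p x * (q x / p x) = q x := (by field_simp)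
        linear_combination -hpq
      constructor
      · rw [htx]
        apply mul_nonneg h.le
        have := Real.log_le_sub_one_of_pos hu
        linarith
      · intro h0
        by_contra hne
        have hne1 : q x / p x ≠ 1 := by
          intro h1
          exact hne ((div_eq_one_iff_eq h.ne').mp h1).symm
        have := Real.log_lt_sub_one_of_pos hu hne1
        have hpos : 0 < p x * ((q x / p x) - 1 - Real.log (q x / p x)) :=
          mul_pos h (by linarith)
        rw [htx] at h0; linarith
  have hsum : ∑ x, t x = ∑ x, p x * Real.log (p x / q x) := by
    simp [ht, Finset.sum_add_distrib, Finset.sum_sub_distrib, hs]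
  constructor
  · have h0 : 0 ≤ ∑ x, t x := Finset.sum_nonneg fun x _ => (hterm x).1
    linarith
  · intro h0
    have hz : ∑ x, t x = 0 := by rw [hsum, h0]
    have := (Finset.sum_eq_zero_iff_of_nonneg (fun x _ => (hterm x).1)).mp hz
    funext x
    exact (hterm x).2 (this x (Finset.mem_univ x))

lemma marg (T : ℕ) (p0 : S → ℝ) (P : S → A → S → ℝ) (polInit : Fin T → S → A → ℝ)
    (hPsum : ∀ s a, ∑ s', P s a s' = 1) (π : S → A → ℝ)
    (g : (Fin (T+1) → S) → (Fin T → A) → ℝ) :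
    (∑ τ : (Fin (T+2) → S) × (Fin (T+1) → A),
      trajHat T p0 P (fullPol T polInit π) τ * g (Fin.init τ.1) (Fin.init τ.2))
    = ∑ σ : Fin (T+1) → S, ∑ α : Fin T → A,
        B1 T p0 P polInit σ α * g σ α * (∑ a, π (σ (Fin.last T)) a) := by
  classical
  set F : (Fin (T+2) → S) × (Fin (T+1) → A) → ℝ :=
    fun τ => trajHat T p0 P (fullPol T polInit π) τ * g (Fin.init τ.1) (Fin.init τ.2) with hF
  set e := Equiv.prodCongr (Fin.snocEquiv (fun _ : Fin (T+2) => S))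
    (Fin.snocEquiv (fun _ : Fin (T+1) => A)) with he
  have h1 : (∑ τ, F τ) = ∑ x, F (e x) := (Equiv.sum_comp e F).symm
  rw [h1]
  simp only [Fintype.sum_prod_type]
  have hFe : ∀ (s' : S) (σ : Fin (T+1) → S) (a : A) (α : Fin T → A),
      F (e ((s', σ), (a, α)))
        = B1 T p0 P polInit σ α * g σ α * (π (σ (Fin.last T)) a * P (σ (Fin.last T)) a s') := by
    intro s' σ a α
    have : e ((s', σ), (a, α)) = (Fin.snoc σ s', Fin.snoc α a) := by
      ext i <;> simp [he, Fin.snocEquiv]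
    rw [this, hF]
    simp only [trajHat_snoc, Fin.init_snoc]
    ring
  simp only [hFe]
  rw [Finset.sum_comm]
  refine Finset.sum_congr rfl fun σ _ => ?_
  rw [Finset.sum_comm]
  have : ∀ a : A, (∑ s' : S, ∑ α : Fin T → A,
      B1 T p0 P polInit σ α * g σ α * (π (σ (Fin.last T)) a * P (σ (Fin.last T)) a s'))
      = ∑ α : Fin T → A, B1 T p0 P polInit σ α * g σ α * π (σ (Fin.last T)) a := by
    intro a
    rw [Finset.sum_comm]
    refine Finset.sum_congr rfl fun α _ => ?_
    rw [← Finset.mul_sum]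
    have : (∑ s' : S, π (σ (Fin.last T)) a * P (σ (Fin.last T)) a s')
        = π (σ (Fin.last T)) a := by
      rw [← Finset.mul_sum, hPsum, mul_one]
    rw [this]
  simp only [this]
  rw [Finset.sum_comm, ← Finset.sum_congr rfl fun α _ => (Finset.mul_sum _ _ _ : _ = _)]

end aux

/-- With the policies `π_0,…,π_{T−1}` fixed (strictly positive),
the trajectory KL divergence `KL(p̂ ‖ p)`, viewed as a function of the time-`T`
policy, is minimized over all state-wise PMFs exactly at the softmax policy
`π_T(a|s) = exp(r(s,a)) / ∑_{a'} exp(r(s,a'))`. -/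
theorem final_step_optimal_policy_is_softmax {S A : Type*} [Fintype S] [Fintype A]
    [Nonempty S] [Nonempty A] (T : ℕ)
    (p0 : S → ℝ) (hp0 : ∀ s, 0 < p0 s) (hp0sum : ∑ s, p0 s = 1)
    (P : S → A → S → ℝ) (hP : ∀ s a s', 0 < P s a s')
    (hPsum : ∀ s a, ∑ s', P s a s' = 1)
    (r : S → A → ℝ)
    (polInit : Fin T → S → A → ℝ) (hpol : ∀ t s a, 0 < polInit t s a)
    (hpolsum : ∀ t s, ∑ a, polInit t s a = 1) :
    ∀ πT : S → A → ℝ, (∀ s a, 0 ≤ πT s a) → (∀ s, ∑ a, πT s a = 1) →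
      (KLdiv
          (trajHat T p0 P (fullPol T polInit
            (fun s a => Real.exp (r s a) / ∑ a', Real.exp (r s a'))))
          (fun τ => trajOptW T p0 P r τ / ∑ τ', trajOptW T p0 P r τ') ≤
        KLdiv (trajHat T p0 P (fullPol T polInit πT))
          (fun τ => trajOptW T p0 P r τ / ∑ τ', trajOptW T p0 P r τ')) ∧
      (KLdiv (trajHat T p0 P (fullPol T polInit πT))
          (fun τ => trajOptW T p0 P r τ / ∑ τ', trajOptW T p0 P r τ') =
        KLdiv
          (trajHat T p0 P (fullPol T polInit
            (fun s a => Real.exp (r s a) / ∑ a', Real.exp (r s a'))))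
          (fun τ => trajOptW T p0 P r τ / ∑ τ', trajOptW T p0 P r τ') →
        πT = fun s a => Real.exp (r s a) / ∑ a', Real.exp (r s a')) := by
  classical
  intro πT hπ0 hπ1
  set πs : S → A → ℝ := fun s a => Real.exp (r s a) / ∑ a', Real.exp (r s a') with hπsdef
  set Z : ℝ := ∑ τ', trajOptW T p0 P r τ' with hZdef
  set q : (Fin (T + 2) → S) × (Fin (T + 1) → A) → ℝ :=
    fun τ => trajOptW T p0 P r τ / Z with hqdef
  -- positivity facts
  have hWpos : ∀ τ, 0 < trajOptW T p0 P r τ := fun τ =>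
    mul_pos (mul_pos (hp0 _) (Finset.prod_pos fun t _ => hP _ _ _)) (Real.exp_pos _)
  have hZpos : 0 < Z := Finset.sum_pos (fun τ _ => hWpos τ) Finset.univ_nonempty
  have hqpos : ∀ τ, 0 < q τ := fun τ => div_pos (hWpos τ) hZpos
  have hEpos : ∀ s, 0 < ∑ a', Real.exp (r s a') := fun s =>
    Finset.sum_pos (fun _ _ => Real.exp_pos _) Finset.univ_nonempty
  have hπspos : ∀ s a, 0 < πs s a := fun s a => div_pos (Real.exp_pos _) (hEpos s)
  have hπssum : ∀ s, ∑ a, πs s a = 1 := fun s => by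
    rw [hπsdef, ← Finset.sum_div, div_self (hEpos s).ne']
  have hfp : ∀ (π : S → A → ℝ), (∀ s a, 0 ≤ π s a) →
      ∀ (t : Fin (T+1)) (s : S) (a : A), 0 ≤ fullPol T polInit π t s a := by
    intro π hπ t s a
    unfold fullPol
    split
    · exact (hpol _ _ _).le
    · exact hπ s a
  have hHatNonneg : ∀ (π : S → A → ℝ), (∀ s a, 0 ≤ π s a) →
      ∀ τ, 0 ≤ trajHat T p0 P (fullPol T polInit π) τ := by
    intro π hπ τ
    exact mul_nonneg (hp0 _).le (Finset.prod_nonneg fun t _ =>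
      mul_nonneg (hP _ _ _).le (hfp π hπ t _ _))
  have hStarPos : ∀ τ, 0 < trajHat T p0 P (fullPol T polInit πs) τ := by
    intro τ
    refine mul_pos (hp0 _) (Finset.prod_pos fun t _ => mul_pos (hP _ _ _) ?_)
    unfold fullPol
    split
    · exact hpol _ _ _
    · exact hπspos _ _
  have hB1pos : ∀ (σ : Fin (T+1) → S) (α : Fin T → A), 0 < B1 T p0 P polInit σ α := fun σ α =>
    mul_pos (hp0 _) (Finset.prod_pos fun t _ => mul_pos (hP _ _ _) (hpol _ _ _))
  have hW1pos : ∀ (σ : Fin (T+1) → S) (α : Fin T → A), 0 < W1 T p0 P r σ α := fun σ α =>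
    mul_pos (mul_pos (hp0 _) (Finset.prod_pos fun t _ => hP _ _ _)) (Real.exp_pos _)
  set G : (Fin (T+1) → S) → (Fin T → A) → ℝ := fun σ α =>
    Z * B1 T p0 P polInit σ α / (W1 T p0 P r σ α * ∑ a', Real.exp (r (σ (Fin.last T)) a'))
    with hGdef
  have hGpos : ∀ σ α, 0 < G σ α := fun σ α =>
    div_pos (mul_pos hZpos (hB1pos σ α)) (mul_pos (hW1pos σ α) (hEpos _))
  -- evaluation of p̂* / q
  have hG_eval : ∀ τ, trajHat T p0 P (fullPol T polInit πs) τ / q τ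
      = G (Fin.init τ.1) (Fin.init τ.2) := by
    intro τ
    have hττ : τ = (Fin.snoc (Fin.init τ.1) (τ.1 (Fin.last (T+1))),
        Fin.snoc (Fin.init τ.2) (τ.2 (Fin.last T))) := by
      rw [Fin.snoc_init_self, Fin.snoc_init_self]
    conv_lhs => rw [hττ]
    rw [hqdef]
    simp only
    rw [trajHat_snoc, trajOptW_snoc, hGdef, hπsdef]
    set σ := Fin.init τ.1
    set α := Fin.init τ.2
    set a := τ.2 (Fin.last T)
    have h1 := (hB1pos σ α).ne'
    have h2 := (hW1pos σ α).ne'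
    have h3 := (hP (σ (Fin.last T)) a (τ.1 (Fin.last (T+1)))).ne'
    have h4 := (hEpos (σ (Fin.last T))).ne'
    have h5 := (Real.exp_pos (r (σ (Fin.last T)) a)).ne'
    field_simp
  set C : ℝ := ∑ σ : Fin (T+1) → S, ∑ α : Fin T → A,
    B1 T p0 P polInit σ α * Real.log (G σ α) with hCdef
  set M : ℝ := ∑ σ : Fin (T+1) → S, ∑ α : Fin T → A, B1 T p0 P polInit σ α with hMdef
  have key : ∀ (π : S → A → ℝ), (∀ s a, 0 ≤ π s a) → (∀ s, ∑ a, π s a = 1) →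
      KLdiv (trajHat T p0 P (fullPol T polInit π)) q
        = KLdiv (trajHat T p0 P (fullPol T polInit π))
            (trajHat T p0 P (fullPol T polInit πs)) + C := by
    intro π hπ hπsum
    unfold KLdiv
    have hterm : ∀ τ, trajHat T p0 P (fullPol T polInit π) τ *
        Real.log (trajHat T p0 P (fullPol T polInit π) τ / q τ)
        = trajHat T p0 P (fullPol T polInit π) τ *
            Real.log (trajHat T p0 P (fullPol T polInit π) τ /
              trajHat T p0 P (fullPol T polInit πs) τ)
          + trajHat T p0 P (fullPol T polInit π) τ *
              Real.log (G (Fin.init τ.1) (Fin.init τ.2)) := by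
      intro τ
      rcases eq_or_lt_of_le (hHatNonneg π hπ τ) with h | h
      · simp [← h]
      · rw [← hG_eval τ, Real.log_div h.ne' (hqpos τ).ne', Real.log_div h.ne' (hStarPos τ).ne',
          Real.log_div (hStarPos τ).ne' (hqpos τ).ne']
        ring
    rw [Finset.sum_congr rfl (fun τ _ => hterm τ), Finset.sum_add_distrib]
    congr 1
    rw [marg T p0 P polInit hPsum π (fun σ α => Real.log (G σ α))]
    simp only [hπsum, mul_one]
    rfl
  have hsum : ∀ (π : S → A → ℝ), (∀ s, ∑ a, π s a = 1) →
      ∑ τ, trajHat T p0 P (fullPol T polInit π) τ = M := by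
    intro π hπsum
    have := marg T p0 P polInit hPsum π (fun _ _ => 1)
    simpa [hπsum] using this
  have h1 := key πs (fun s a => (hπspos s a).le) hπssum
  have h2 := key πT hπ0 hπ1
  have hKLstar0 : KLdiv (trajHat T p0 P (fullPol T polInit πs))
      (trajHat T p0 P (fullPol T polInit πs)) = 0 := by
    unfold KLdiv
    apply Finset.sum_eq_zero
    intro τ _
    rw [div_self (hStarPos τ).ne', Real.log_one, mul_zero]
  have hg := gibbs (p := trajHat T p0 P (fullPol T polInit πT))
    (q := trajHat T p0 P (fullPol T polInit πs)) (hHatNonneg πT hπ0) hStarPos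
    (by rw [hsum πT hπ1, hsum πs hπssum])
  have hgle : 0 ≤ KLdiv (trajHat T p0 P (fullPol T polInit πT))
      (trajHat T p0 P (fullPol T polInit πs)) := hg.1
  constructor
  · rw [h1, h2, hKLstar0, zero_add]
    linarith
  · intro heq
    rw [h1, h2, hKLstar0, zero_add] at heq
    have h0 : KLdiv (trajHat T p0 P (fullPol T polInit πT))
        (trajHat T p0 P (fullPol T polInit πs)) = 0 := by linarith
    have hfun := hg.2 h0
    funext s a
    have hc := congrFun hfun (Fin.snoc (fun _ : Fin (T+1) => s) s,
      Fin.snoc (fun _ : Fin T => a) a)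
    rw [trajHat_snoc, trajHat_snoc] at hc
    have := mul_left_cancel₀ (hB1pos _ _).ne' hc
    have := mul_left_cancel₀ (hP s a s).ne' this
    exact this
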